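/- Let A be a semi-Montel topological algebra (i.e., A is Hausdorff and every von Neumann bounded subset of A is relatively compact) that has a right bounded approximate identity. Then A has a right identity: there exists e ∈ A such that a·e = a for all a ∈ A. -/

import Mathlib

open Filter Topology Bornology Set Pointwise

universe u

/-- A semi-Montel topological algebra with a right bounded approximate
identity has a right identity. -/
theorem stmt_1 {A : Type u} [NonUnitalRing A] [Module ℂ A] [TopologicalSpace A]
    [IsTopologicalAddGroup A] [ContinuousSMul ℂ A] [T2Space A]
    (hmul_left : ∀ a : A, Continuous fun b : A => a * b)
    (hmul_right : ∀ b : A, Continuous fun a : A => a * b)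
    (hMontel : ∀ s : Set A, IsVonNBounded ℂ s → IsCompact (closure s))
    (hbai : ∃ (ι : Type u) (_ : Preorder ι) (_ : IsDirected ι (· ≤ ·)) (_ : Nonempty ι)
      (e : ι → A), IsVonNBounded ℂ (Set.range e) ∧
        ∀ a : A, Tendsto (fun i => a * e i) atTop (𝓝 a)) :
    ∃ e : A, ∀ a : A, a * e = a := by
  obtain ⟨ι, hpre, hdir, hne, e, hbd, hconv⟩ := hbai
  letI : Preorder ι := hpre
  haveI : IsDirected ι (· ≤ ·) := hdir
  haveI : Nonempty ι := hne
  have hcomp : IsCompact (closure (Set.range e)) := hMontel _ hbd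
  have hle : Filter.map e atTop ≤ 𝓟 (closure (Set.range e)) := by
    rw [Filter.le_principal_iff]
    exact Filter.mem_map.2 (Filter.univ_mem' fun i => subset_closure ⟨i, rfl⟩)
  haveI : (Filter.atTop : Filter ι).NeBot := Filter.atTop_neBot
  obtain ⟨c, -, hc⟩ := hcomp.exists_clusterPt hle
  refine ⟨c, fun a => ?_⟩
  have h1 : ClusterPt (a * c) (Filter.map (fun i => a * e i) atTop) := by
    have := hc.map ((hmul_left a).continuousAt) (Filter.tendsto_map.comp Filter.tendsto_id)
    simpa [Filter.map_map, Function.comp_def] using this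
  have h2 : Filter.map (fun i => a * e i) atTop ≤ 𝓝 a := hconv a
  haveI : (𝓝 (a * c) ⊓ Filter.map (fun i => a * e i) atTop).NeBot := h1
  have : (𝓝 (a * c) ⊓ 𝓝 a).NeBot := this.mono (inf_le_inf_left _ h2)
  exact eq_of_nhds_neBot this
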